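/- The trace of the antisymmetrizer A_p on ⨂[ℂ]^p V equals the binomial coefficient N choose p, i.e. LinearMap.trace ℂ (⨂[ℂ]^p V) A_p = (Nat.choose N p : ℂ). In particular this trace is 0 when p > N and 1 when p = N. -/

import Mathlib

open scoped TensorProduct

/-- The permutation operator `P_σ` on the `m`-fold tensor power of `V = Fin N → ℂ`,
sending `v₁ ⊗ ⋯ ⊗ v_m` to `v_{σ⁻¹(1)} ⊗ ⋯ ⊗ v_{σ⁻¹(m)}`. -/
noncomputable def permOp (N m : ℕ) (σ : Equiv.Perm (Fin m)) :
    (⨂[ℂ] _ : Fin m, (Fin N → ℂ)) →ₗ[ℂ] ⨂[ℂ] _ : Fin m, (Fin N → ℂ) :=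
  (PiTensorProduct.reindex ℂ (fun _ : Fin m => (Fin N → ℂ)) σ).toLinearMap

/-- The antisymmetrizer `A_p = (p!)⁻¹ ∑_σ sign(σ) P_σ` on `V^{⊗ p}`. -/
noncomputable def antisym (N p : ℕ) :
    (⨂[ℂ] _ : Fin p, (Fin N → ℂ)) →ₗ[ℂ] ⨂[ℂ] _ : Fin p, (Fin N → ℂ) :=
  (Nat.factorial p : ℂ)⁻¹ •
    ∑ σ : Equiv.Perm (Fin p), ((Equiv.Perm.sign σ : ℤ) : ℂ) • permOp N p σ

variable (N p : ℕ)

noncomputable def fwd : (⨂[ℂ] _ : Fin p, (Fin N → ℂ)) →ₗ[ℂ] ((Fin p → Fin N) → ℂ) :=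
  PiTensorProduct.lift (MultilinearMap.pi fun f : Fin p → Fin N =>
    (MultilinearMap.mkPiAlgebra ℂ (Fin p) ℂ).compLinearMap fun i => LinearMap.proj (f i))

noncomputable def bwd : ((Fin p → Fin N) → ℂ) →ₗ[ℂ] (⨂[ℂ] _ : Fin p, (Fin N → ℂ)) :=
  (Pi.basisFun ℂ (Fin p → Fin N)).constr ℂ
    (fun f => PiTensorProduct.tprod ℂ (fun i => Pi.single (f i) 1))

@[simp] lemma fwd_tprod (v : Fin p → (Fin N → ℂ)) :
    fwd N p (PiTensorProduct.tprod ℂ v) = fun f => ∏ i, v i (f i) := by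
  ext f
  simp [fwd, MultilinearMap.pi_apply]

lemma bwd_apply (x : (Fin p → Fin N) → ℂ) :
    bwd N p x = ∑ f : Fin p → Fin N, x f • PiTensorProduct.tprod ℂ (fun i => Pi.single (f i) 1) := by
  simp [bwd, Module.Basis.constr_apply_fintype]

lemma prod_single (g f : Fin p → Fin N) :
    (∏ i : Fin p, (Pi.single (g i) (1:ℂ) : Fin N → ℂ) (f i)) = if f = g then 1 else 0 := by
  have : ∀ i : Fin p, (Pi.single (g i) (1:ℂ) : Fin N → ℂ) (f i) = if f i = g i then 1 else 0 := by
    intro i; simp [Pi.single_apply]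
  simp only [this, Finset.prod_boole]
  simp [funext_iff]

lemma fwd_bwd : (fwd N p).comp (bwd N p) = LinearMap.id := by
  apply (Pi.basisFun ℂ (Fin p → Fin N)).ext
  intro g
  simp only [LinearMap.comp_apply, Pi.basisFun_apply, LinearMap.id_apply]
  rw [bwd_apply]
  simp only [map_sum, map_smul, fwd_tprod]
  ext f
  simp only [Finset.sum_apply, Pi.smul_apply, smul_eq_mul, prod_single, mul_ite, mul_one,
    mul_zero]
  simp [Finset.sum_ite_eq]

lemma bwd_fwd : (bwd N p).comp (fwd N p) = LinearMap.id := by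
  apply PiTensorProduct.ext
  apply MultilinearMap.ext
  intro v
  simp only [LinearMap.compMultilinearMap_apply, LinearMap.comp_apply, fwd_tprod,
    LinearMap.id_apply, bwd_apply]
  conv_rhs => rw [show v = fun i => ∑ j, v i j • (Pi.single j 1 : Fin N → ℂ) by
    funext i; simp [← Pi.single_smul', Finset.univ_sum_single]]
  rw [MultilinearMap.map_sum]
  refine Finset.sum_congr rfl fun f _ => ?_
  rw [MultilinearMap.map_smul_univ]

noncomputable def tpEquiv : (⨂[ℂ] _ : Fin p, (Fin N → ℂ)) ≃ₗ[ℂ] ((Fin p → Fin N) → ℂ) :=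
  LinearEquiv.ofLinear (fwd N p) (bwd N p) (fwd_bwd N p) (bwd_fwd N p)

noncomputable def tpBasis : Module.Basis (Fin p → Fin N) ℂ (⨂[ℂ] _ : Fin p, (Fin N → ℂ)) :=
  Module.Basis.ofEquivFun (tpEquiv N p)

lemma tpBasis_apply (g : Fin p → Fin N) :
    tpBasis N p g = PiTensorProduct.tprod ℂ (fun i => Pi.single (g i) 1) := by
  rw [tpBasis, Module.Basis.coe_ofEquivFun]
  have : (tpEquiv N p) (PiTensorProduct.tprod ℂ (fun i => Pi.single (g i) 1)) = Pi.single g 1 := by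
    simp only [tpEquiv, LinearEquiv.ofLinear_apply, fwd_tprod]
    ext f
    simp only [prod_single, Pi.single_apply]
    rw [Finset.prod_boole]
    simp [funext_iff]
  show (tpEquiv N p).symm (Pi.single g 1) = _
  rw [← this, LinearEquiv.symm_apply_apply]

lemma permOp_basis (σ : Equiv.Perm (Fin p)) (g : Fin p → Fin N) :
    permOp N p σ (tpBasis N p g) = tpBasis N p (g ∘ ⇑σ⁻¹) := by
  simp only [tpBasis_apply, permOp, LinearEquiv.coe_coe, PiTensorProduct.reindex_tprod]
  rfl

lemma trace_permOp (σ : Equiv.Perm (Fin p)) :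
    LinearMap.trace ℂ _ (permOp N p σ)
      = ∑ g : Fin p → Fin N, (if g ∘ ⇑σ⁻¹ = g then (1:ℂ) else 0) := by
  classical
  rw [LinearMap.trace_eq_matrix_trace ℂ (tpBasis N p), Matrix.trace]
  refine Finset.sum_congr rfl fun g _ => ?_
  rw [Matrix.diag_apply, LinearMap.toMatrix_apply, permOp_basis, Module.Basis.repr_self,
    Finsupp.single_apply]

lemma key_sum (g : Fin p → Fin N) :
    ∑ σ : Equiv.Perm (Fin p), (if g ∘ ⇑σ⁻¹ = g then ((Equiv.Perm.sign σ : ℤ) : ℂ) else 0)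
      = if Function.Injective g then 1 else 0 := by
  classical
  by_cases hg : Function.Injective g
  · rw [if_pos hg, Finset.sum_eq_single 1]
    · simp
    · intro σ _ hσ
      rw [if_neg]
      intro hc
      apply hσ
      have : ∀ i, σ⁻¹ i = i := by
        intro i
        exact hg (congrFun hc i)
      ext i
      have := this (σ i)
      simp at this
      simp [← this]
    · simp
  · rw [if_neg hg]
    obtain ⟨i, j, hfij, hij⟩ : ∃ i j, g i = g j ∧ i ≠ j := by
      simp only [Function.Injective, not_forall] at hg
      obtain ⟨i, j, h1, h2⟩ := hg
      exact ⟨i, j, h1, h2⟩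
    set τ := Equiv.swap i j with hτ
    have hgτ : g ∘ ⇑τ = g := by
      funext k
      rcases eq_or_ne k i with rfl | hki
      · simp [hτ, Equiv.swap_apply_left, hfij]
      rcases eq_or_ne k j with rfl | hkj
      · simp [hτ, Equiv.swap_apply_right, hfij]
      · simp [hτ, Equiv.swap_apply_of_ne_of_ne hki hkj]
    have hS : ∑ σ : Equiv.Perm (Fin p),
          (if g ∘ ⇑σ⁻¹ = g then ((Equiv.Perm.sign σ : ℤ) : ℂ) else 0)
        = ∑ σ : Equiv.Perm (Fin p),
          (if g ∘ ⇑(σ * τ)⁻¹ = g then ((Equiv.Perm.sign (σ * τ) : ℤ) : ℂ) else 0) :=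
      (Fintype.sum_equiv (Equiv.mulRight τ) _ _ (fun σ => rfl)).symm
    have hcond : ∀ σ : Equiv.Perm (Fin p), (g ∘ ⇑(σ * τ)⁻¹ = g) ↔ (g ∘ ⇑σ⁻¹ = g) := by
      intro σ
      have : g ∘ ⇑(σ * τ)⁻¹ = (g ∘ ⇑τ⁻¹) ∘ ⇑σ⁻¹ := by
        funext k; simp [Equiv.Perm.mul_apply, Function.comp]
      rw [this, show ⇑τ⁻¹ = ⇑τ by simp [hτ], hgτ]
    have hsign : ∀ σ : Equiv.Perm (Fin p),
        ((Equiv.Perm.sign (σ * τ) : ℤ) : ℂ) = -((Equiv.Perm.sign σ : ℤ) : ℂ) := by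
      intro σ
      rw [map_mul, Equiv.Perm.sign_swap hij]
      push_cast
      ring
    have hterm : ∀ σ : Equiv.Perm (Fin p),
        (if g ∘ ⇑(σ * τ)⁻¹ = g then ((Equiv.Perm.sign (σ * τ) : ℤ) : ℂ) else 0)
          = -(if g ∘ ⇑σ⁻¹ = g then ((Equiv.Perm.sign σ : ℤ) : ℂ) else 0) := by
      intro σ
      by_cases h : g ∘ ⇑σ⁻¹ = g
      · rw [if_pos ((hcond σ).2 h), if_pos h, hsign]
      · rw [if_neg (fun hc => h ((hcond σ).1 hc)), if_neg h, neg_zero]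
    rw [Finset.sum_congr rfl fun σ _ => hterm σ, Finset.sum_neg_distrib] at hS
    linear_combination hS / 2

lemma count_inj :
    (∑ g : Fin p → Fin N, (if Function.Injective g then (1:ℂ) else 0))
      = (N.descFactorial p : ℂ) := by
  classical
  rw [Finset.sum_boole]
  have : (Finset.univ.filter (fun g : Fin p → Fin N => Function.Injective g)).card
      = Fintype.card (Fin p ↪ Fin N) := by
    rw [← Fintype.card_subtype]
    exact Fintype.card_congr (Equiv.subtypeInjectiveEquivEmbedding _ _)
  rw [this, Fintype.card_embedding_eq]
  simp

/-- The trace of the antisymmetrizer on `V^{⊗ p}` is the binomial coefficient `N.choose p`;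
in particular it vanishes for `p > N` and equals `1` for `p = N`. -/
theorem trace_antisym (N : ℕ) (hN : 0 < N) (p : ℕ) :
    LinearMap.trace ℂ (⨂[ℂ] _ : Fin p, (Fin N → ℂ)) (antisym N p)
        = (Nat.choose N p : ℂ) ∧
      (N < p → LinearMap.trace ℂ (⨂[ℂ] _ : Fin p, (Fin N → ℂ)) (antisym N p) = 0) ∧
      (p = N → LinearMap.trace ℂ (⨂[ℂ] _ : Fin p, (Fin N → ℂ)) (antisym N p) = 1) := by
  classical
  have main : LinearMap.trace ℂ (⨂[ℂ] _ : Fin p, (Fin N → ℂ)) (antisym N p)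
      = (Nat.choose N p : ℂ) := by
    rw [antisym, map_smul, map_sum]
    simp only [map_smul, trace_permOp, smul_eq_mul, Finset.mul_sum, mul_ite, mul_one, mul_zero]
    rw [Finset.sum_comm]
    have hstep : ∀ g : Fin p → Fin N, (∑ σ : Equiv.Perm (Fin p),
        if g ∘ ⇑σ⁻¹ = g then ((p.factorial : ℂ))⁻¹ * ((Equiv.Perm.sign σ : ℤ) : ℂ) else 0)
        = (p.factorial : ℂ)⁻¹ * (if Function.Injective g then 1 else 0) := by
      intro g
      rw [← key_sum N p g, Finset.mul_sum]
      exact Finset.sum_congr rfl fun σ _ => by split <;> simp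
    simp only [hstep]
    rw [← Finset.mul_sum, count_inj, Nat.descFactorial_eq_factorial_mul_choose]
    push_cast
    rw [← mul_assoc, inv_mul_cancel₀ (by exact_mod_cast Nat.factorial_ne_zero p), one_mul]
  refine ⟨main, fun h => ?_, fun h => ?_⟩
  · rw [main, Nat.choose_eq_zero_of_lt h, Nat.cast_zero]
  · rw [main, h, Nat.choose_self, Nat.cast_one]
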